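/- arXiv:1212.5398 — 4 statements merged into one kernel-verified Lean document; each statement's English description precedes it below -/
import Mathlib

section
/- If two functions f, g : X → ℝ are weakly ε-interleaved, then they are strongly 3ε-interleaved. -/
/-- Sublevel set of a real-valued function. -/
def sublevel {X : Type*} (f : X → ℝ) (a : ℝ) : Set X := f ⁻¹' (Set.Iic a)

/-- Strong `ε`-interleaving of sublevel set filtrations. -/
def StronglyInterleaved {X : Type*} (f g : X → ℝ) (ε : ℝ) : Prop :=
  ∀ a : ℝ,
    sublevel f a ⊆ sublevel g (a + ε) ∧ sublevel g (a + ε) ⊆ sublevel f (a + 2 * ε) ∧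
    sublevel g a ⊆ sublevel f (a + ε) ∧ sublevel f (a + ε) ⊆ sublevel g (a + 2 * ε)

/-- Weak `ε`-interleaving: the interleaving inclusions hold along the
arithmetic progression determined by some `a ∈ ℝ`. -/
def WeaklyInterleaved {X : Type*} (f g : X → ℝ) (ε : ℝ) : Prop :=
  ∃ a : ℝ, ∀ n : ℤ,
    sublevel f (a + 2 * n * ε) ⊆ sublevel g (a + (2 * n + 1) * ε) ∧
    sublevel g (a + (2 * n + 1) * ε) ⊆ sublevel f (a + 2 * (n + 1) * ε)

lemma sublevel_mono {X : Type*} (h : X → ℝ) {a b : ℝ} (hab : a ≤ b) :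
    sublevel h a ⊆ sublevel h b := fun x hx => le_trans hx hab

lemma exists_grid (a c ε : ℝ) (hε : 0 < ε) :
    ∃ n : ℤ, c ≤ a + 2 * n * ε ∧ a + 2 * n * ε < c + 2 * ε := by
  refine ⟨⌈(c - a) / (2 * ε)⌉, ?_, ?_⟩
  · have h1 := Int.le_ceil ((c - a) / (2 * ε))
    have h2 : 0 < 2 * ε := by linarith
    rw [div_le_iff₀ h2] at h1
    linarith
  · have h1 := Int.ceil_lt_add_one ((c - a) / (2 * ε))
    have h2 : 0 < 2 * ε := by linarith
    have h3 : ((⌈(c - a) / (2 * ε)⌉ : ℝ) - 1) * (2 * ε) < c - a := by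
      rw [← lt_div_iff₀ h2]; linarith
    linarith

/-- Weakly `ε`-interleaved functions are strongly `3ε`-interleaved. -/
theorem stronglyInterleaved_of_weaklyInterleaved
    {X : Type*} (f g : X → ℝ) (ε : ℝ) (hε : 0 < ε)
    (h : WeaklyInterleaved f g ε) : StronglyInterleaved f g (3 * ε) := by
  obtain ⟨a, ha⟩ := h
  intro b
  refine ⟨?_, ?_, ?_, ?_⟩
  · -- f b ⊆ g (b + 3ε)
    obtain ⟨n, h1, h2⟩ := exists_grid a b ε hε
    exact ((sublevel_mono f h1).trans (ha n).1).trans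
      (sublevel_mono g (by push_cast; linarith))
  · -- g (b + 3ε) ⊆ f (b + 3ε + 2*(3ε))
    obtain ⟨n, h1, h2⟩ := exists_grid (a + ε) (b + 3 * ε) ε hε
    have e1 : (b + 3 * ε : ℝ) ≤ a + (2 * n + 1) * ε := by push_cast at h1 ⊢; linarith
    have e2 : (a + 2 * (n + 1) * ε : ℝ) ≤ b + 2 * (3 * ε) := by
      push_cast at h2 ⊢; linarith
    exact ((sublevel_mono g e1).trans (ha n).2).trans (sublevel_mono f e2)
  · -- g b ⊆ f (b + 3ε)
    obtain ⟨n, h1, h2⟩ := exists_grid (a + ε) b ε hε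
    have e1 : (b : ℝ) ≤ a + (2 * n + 1) * ε := by push_cast at h1 ⊢; linarith
    have e2 : (a + 2 * (n + 1) * ε : ℝ) ≤ b + 3 * ε := by push_cast at h2 ⊢; linarith
    exact ((sublevel_mono g e1).trans (ha n).2).trans (sublevel_mono f e2)
  · -- f (b + 3ε) ⊆ g (b + 3ε + 2*(3ε))
    obtain ⟨n, h1, h2⟩ := exists_grid a (b + 3 * ε) ε hε
    have e2 : (a + (2 * n + 1) * ε : ℝ) ≤ b + 2 * (3 * ε) := by
      push_cast at h2 ⊢; linarith
    exact ((sublevel_mono f h1).trans (ha n).1).trans (sublevel_mono g e2)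
end

section
/- An interval module over (ℝ, ≤) is indecomposable: the interval module I_J for a nonempty interval J cannot be written as a direct sum of two nonzero persistence submodules. -/
open CategoryTheory CategoryTheory.Limits

/-- `M` is an interval module for the interval `J ⊆ P`: one-dimensional on `J`
with identity (isomorphism) structure maps inside `J`, and zero outside. -/
def IsIntervalModule (k : Type) [Field k] {P : Type} [Preorder P]
    (J : Set P) (M : P ⥤ ModuleCat k) : Prop :=
  (∀ x ∈ J, Nonempty (M.obj x ≃ₗ[k] k)) ∧
  (∀ x ∉ J, Subsingleton (M.obj x)) ∧
  (∀ (x y : P) (h : x ≤ y), x ∈ J → y ∈ J →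
    Function.Bijective (M.map (homOfLE h))) ∧
  (∀ (x y : P) (h : x ≤ y), (x ∉ J ∨ y ∉ J) → M.map (homOfLE h) = 0)

section Aux

variable {k : Type} [Field k]

/-- In a one-dimensional space, two "independent" images force triviality. -/
lemma one_dim_aux {V A B : Type*} [AddCommGroup V] [Module k V]
    [AddCommGroup A] [Module k A] [AddCommGroup B] [Module k B]
    (e : V ≃ₗ[k] k) (iA : A →ₗ[k] V) (pA : V →ₗ[k] A)
    (iB : B →ₗ[k] V) (pB : V →ₗ[k] B)
    (hA : ∀ a, pA (iA a) = a) (hB : ∀ b, pB (iB b) = b)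
    (hAB : ∀ a, pB (iA a) = 0)
    (a : A) (ha : a ≠ 0) (b : B) (hb : b ≠ 0) : False := by
  have hu : e (iA a) ≠ 0 := by
    intro h
    have : iA a = 0 := by
      have := congrArg e.symm h
      simpa using this
    exact ha (by rw [← hA a, this, map_zero])
  have hv : e (iB b) ≠ 0 := by
    intro h
    have : iB b = 0 := by
      have := congrArg e.symm h
      simpa using this
    exact hb (by rw [← hB b, this, map_zero])
  set c : k := e (iB b) / e (iA a) with hc
  have hvc : iB b = c • iA a := by
    apply e.injective
    rw [map_smul, smul_eq_mul, hc, div_mul_cancel₀ _ hu]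
  have : b = c • pB (iA a) := by
    rw [← map_smul, ← hvc, hB]
  rw [hAB, smul_zero] at this
  exact hb this

end Aux

section Main

variable {k : Type} [Field k]

/-- Key asymmetric lemma: with a split decomposition of `M` into `A` and `B`,
if `A` is nontrivial at `x`, `B` is nontrivial at `y`, and `x ≤ y`, we get a
contradiction. -/
lemma interval_aux (J : Set ℝ) (M A B : ℝ ⥤ ModuleCat k)
    (hM : IsIntervalModule k J M)
    (iA : A ⟶ M) (pA : M ⟶ A) (iB : B ⟶ M) (pB : M ⟶ B)
    (hA1 : iA ≫ pA = 𝟙 A) (hB1 : iB ≫ pB = 𝟙 B)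
    (hABz : iA ≫ pB = 0) (hBAz : iB ≫ pA = 0)
    (htot : pA ≫ iA + pB ≫ iB = 𝟙 M)
    (x y : ℝ) (hxy : x ≤ y)
    (hAx : ¬ Subsingleton (A.obj x)) (hBy : ¬ Subsingleton (B.obj y)) :
    False := by
  obtain ⟨hdim, hout, hbij, -⟩ := hM
  -- pointwise identities
  have hApA : ∀ (z : ℝ) (a : A.obj z), (pA.app z) ((iA.app z) a) = a := by
    intro z a
    have := congrArg (fun f => f.app z) hA1
    simp only [NatTrans.comp_app] at this
    calc (pA.app z) ((iA.app z) a) = (iA.app z ≫ pA.app z) a := rfl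
      _ = a := by rw [this]; rfl
  have hBpB : ∀ (z : ℝ) (b : B.obj z), (pB.app z) ((iB.app z) b) = b := by
    intro z b
    have := congrArg (fun f => f.app z) hB1
    simp only [NatTrans.comp_app] at this
    calc (pB.app z) ((iB.app z) b) = (iB.app z ≫ pB.app z) b := rfl
      _ = b := by rw [this]; rfl
  have hApB : ∀ (z : ℝ) (a : A.obj z), (pB.app z) ((iA.app z) a) = 0 := by
    intro z a
    have := congrArg (fun f => f.app z) hABz
    simp only [NatTrans.comp_app] at this
    calc (pB.app z) ((iA.app z) a) = (iA.app z ≫ pB.app z) a := rfl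
      _ = 0 := by rw [this]; rfl
  have hBpA : ∀ (z : ℝ) (b : B.obj z), (pA.app z) ((iB.app z) b) = 0 := by
    intro z b
    have := congrArg (fun f => f.app z) hBAz
    simp only [NatTrans.comp_app] at this
    calc (pA.app z) ((iB.app z) b) = (iB.app z ≫ pA.app z) b := rfl
      _ = 0 := by rw [this]; rfl
  have htotp : ∀ (z : ℝ) (m : M.obj z),
      (iA.app z) ((pA.app z) m) + (iB.app z) ((pB.app z) m) = m := by
    intro z m
    have := congrArg (fun f => f.app z) htot
    simp only [NatTrans.app_add, NatTrans.comp_app] at this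
    calc (iA.app z) ((pA.app z) m) + (iB.app z) ((pB.app z) m)
        = ((pA.app z ≫ iA.app z) + (pB.app z ≫ iB.app z)) m := rfl
      _ = m := by rw [this]; rfl
  -- nontrivial fiber forces membership in J
  have memJ : ∀ {F : ℝ ⥤ ModuleCat k} (iF : F ⟶ M) (pF : M ⟶ F)
      (hF : ∀ (z : ℝ) (a : F.obj z), (pF.app z) ((iF.app z) a) = a)
      (z : ℝ), ¬ Subsingleton (F.obj z) → z ∈ J := by
    intro F iF pF hF z hz
    by_contra hzJ
    have : Subsingleton (M.obj z) := hout z hzJ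
    exact hz ⟨fun a b => by
      rw [← hF z a, ← hF z b, Subsingleton.elim ((iF.app z) a) ((iF.app z) b)]⟩
  have hxJ : x ∈ J := memJ iA pA hApA x hAx
  have hyJ : y ∈ J := memJ iB pB hBpB y hBy
  -- one-dimensionality: at y, A.obj y is trivial
  obtain ⟨ey⟩ := hdim y hyJ
  obtain ⟨b1, b2, hbne⟩ := (not_subsingleton_iff_nontrivial.mp hBy).exists_pair_ne
  have hAy : Subsingleton (A.obj y) := by
    by_contra hAy
    obtain ⟨a1, a2, hane⟩ := (not_subsingleton_iff_nontrivial.mp hAy).exists_pair_ne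
    exact one_dim_aux (k := k) (V := ↑(M.obj y)) (A := ↑(A.obj y)) (B := ↑(B.obj y)) ey (iA.app y).hom (pA.app y).hom (iB.app y).hom (pB.app y).hom
      (hApA y) (hBpB y) (hApB y) (a1 - a2) (sub_ne_zero.mpr hane)
      (b1 - b2) (sub_ne_zero.mpr hbne)
  -- at x, B.obj x is trivial
  obtain ⟨ex⟩ := hdim x hxJ
  obtain ⟨a1, a2, hane⟩ := (not_subsingleton_iff_nontrivial.mp hAx).exists_pair_ne
  have hBx : Subsingleton (B.obj x) := by
    by_contra hBx
    obtain ⟨c1, c2, hcne⟩ := (not_subsingleton_iff_nontrivial.mp hBx).exists_pair_ne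
    exact one_dim_aux (k := k) (V := ↑(M.obj x)) (A := ↑(A.obj x)) (B := ↑(B.obj x)) ex (iA.app x).hom (pA.app x).hom (iB.app x).hom (pB.app x).hom
      (hApA x) (hBpB x) (hApB x) (a1 - a2) (sub_ne_zero.mpr hane)
      (c1 - c2) (sub_ne_zero.mpr hcne)
  -- the structure map x → y is bijective, but factors through zero
  have hbij' := hbij x y hxy hxJ hyJ
  have key : ∀ m : M.obj y, m = 0 := by
    intro m
    obtain ⟨m', rfl⟩ := hbij'.2 m
    have hdecomp := htotp x m'
    set f := M.map (homOfLE hxy)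
    have h1 : f ((iA.app x) ((pA.app x) m')) = (iA.app y) ((A.map (homOfLE hxy)) ((pA.app x) m')) := by
      have := iA.naturality (homOfLE hxy)
      calc f ((iA.app x) ((pA.app x) m')) = (iA.app x ≫ f) ((pA.app x) m') := rfl
        _ = (A.map (homOfLE hxy) ≫ iA.app y) ((pA.app x) m') := by rw [this]
        _ = (iA.app y) ((A.map (homOfLE hxy)) ((pA.app x) m')) := rfl
    have h2 : f ((iB.app x) ((pB.app x) m')) = (iB.app y) ((B.map (homOfLE hxy)) ((pB.app x) m')) := by
      have := iB.naturality (homOfLE hxy)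
      calc f ((iB.app x) ((pB.app x) m')) = (iB.app x ≫ f) ((pB.app x) m') := rfl
        _ = (B.map (homOfLE hxy) ≫ iB.app y) ((pB.app x) m') := by rw [this]
        _ = (iB.app y) ((B.map (homOfLE hxy)) ((pB.app x) m')) := rfl
    have hAz : (A.map (homOfLE hxy)) ((pA.app x) m') = (0 : A.obj y) :=
      Subsingleton.elim _ _
    have hBz : (pB.app x) m' = (0 : B.obj x) := Subsingleton.elim _ _
    calc f m' = f ((iA.app x) ((pA.app x) m') + (iB.app x) ((pB.app x) m')) := by
          rw [hdecomp]
      _ = f ((iA.app x) ((pA.app x) m')) + f ((iB.app x) ((pB.app x) m')) :=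
          map_add _ _ _
      _ = 0 := by rw [h1, h2, hAz, hBz]; simp
  have hMy : Subsingleton (M.obj y) := ⟨fun u v => by rw [key u, key v]⟩
  have : (1 : k) = 0 := by
    have := key (ey.symm 1)
    have := congrArg ey this
    simpa using this
  exact one_ne_zero this

end Main

/-- An interval module over `(ℝ, ≤)` is indecomposable: it is not isomorphic to
the direct sum of two nonzero persistence modules. -/
theorem intervalModule_indecomposable (k : Type) [Field k]
    (J : Set ℝ) (hJ : J.Nonempty) (M : ℝ ⥤ ModuleCat k)
    (hM : IsIntervalModule k J M)
    : ¬ ∃ (A B : ℝ ⥤ ModuleCat k),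
        ¬ IsZero A ∧ ¬ IsZero B ∧ Nonempty (M ≅ A ⊞ B) := by
  rintro ⟨A, B, hA, hB, ⟨e⟩⟩
  -- split maps
  set iA : A ⟶ M := biprod.inl ≫ e.inv with hiA
  set pA : M ⟶ A := e.hom ≫ biprod.fst with hpA
  set iB : B ⟶ M := biprod.inr ≫ e.inv with hiB
  set pB : M ⟶ B := e.hom ≫ biprod.snd with hpB
  have hA1 : iA ≫ pA = 𝟙 A := by
    rw [hiA, hpA, Category.assoc, ← Category.assoc e.inv, e.inv_hom_id,
      Category.id_comp, biprod.inl_fst]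
  have hB1 : iB ≫ pB = 𝟙 B := by
    rw [hiB, hpB, Category.assoc, ← Category.assoc e.inv, e.inv_hom_id,
      Category.id_comp, biprod.inr_snd]
  have hABz : iA ≫ pB = 0 := by
    rw [hiA, hpB, Category.assoc, ← Category.assoc e.inv, e.inv_hom_id,
      Category.id_comp, biprod.inl_snd]
  have hBAz : iB ≫ pA = 0 := by
    rw [hiB, hpA, Category.assoc, ← Category.assoc e.inv, e.inv_hom_id,
      Category.id_comp, biprod.inr_fst]
  have htot : pA ≫ iA + pB ≫ iB = 𝟙 M := by
    rw [hiA, hpA, hiB, hpB]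
    calc e.hom ≫ biprod.fst ≫ (biprod.inl ≫ e.inv)
          + e.hom ≫ biprod.snd ≫ (biprod.inr ≫ e.inv)
        = e.hom ≫ (biprod.fst ≫ biprod.inl + biprod.snd ≫ biprod.inr) ≫ e.inv := by
          simp only [Preadditive.add_comp, Preadditive.comp_add, Category.assoc]
      _ = 𝟙 M := by rw [biprod.total, Category.id_comp, e.hom_inv_id]
  -- find nontrivial points
  obtain ⟨x, hx⟩ : ∃ x, ¬ Subsingleton (A.obj x) := by
    by_contra h
    push_neg at h
    exact hA (Functor.isZero _ fun z => by
      have := h z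
      exact @ModuleCat.isZero_of_subsingleton k _ (A.obj z) this)
  obtain ⟨y, hy⟩ : ∃ y, ¬ Subsingleton (B.obj y) := by
    by_contra h
    push_neg at h
    exact hB (Functor.isZero _ fun z => by
      have := h z
      exact @ModuleCat.isZero_of_subsingleton k _ (B.obj z) this)
  rcases le_total x y with hxy | hyx
  · exact interval_aux J M A B hM iA pA iB pB hA1 hB1 hABz hBAz htot x y hxy hx hy
  · exact interval_aux J M B A hM iB pB iA pA hB1 hA1 hBAz hABz
      (by rw [add_comm]; exact htot) y x hyx hy hx
end

section
/- The endomorphism ring of an interval module I_J over (ℝ, ≤) is isomorphic to the field k; in particular it is local. -/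
set_option synthInstance.maxHeartbeats 1000000

open CategoryTheory

/-- Any linear endomorphism of a module identified with `k` is scalar. -/
lemma scalar_endo {k : Type} {V : Type*} [Field k] [AddCommGroup V] [Module k V]
    (f : V ≃ₗ[k] k) (g : V →ₗ[k] V) (w : V) :
    g w = f (g (f.symm 1)) • w := by
  have hbasis : ∀ u : V, u = f u • f.symm 1 := by
    intro u
    rw [← map_smul, smul_eq_mul, mul_one, f.symm_apply_apply]
  conv_lhs => rw [hbasis w, map_smul, hbasis (g (f.symm 1))]
  rw [smul_smul, mul_comm, ← smul_smul, ← hbasis w]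

/-- `ModuleCat` version of `scalar_endo`. -/
lemma scalar_endo' {k : Type} [Field k] {V : ModuleCat k}
    (f : V ≃ₗ[k] k) (g : V ⟶ V) (w : V) :
    g w = f (g (f.symm 1)) • w := by
  exact scalar_endo f g.hom w

lemma symm_one_ne_zero {k : Type} {V : Type*} [Field k] [AddCommGroup V] [Module k V]
    (f : V ≃ₗ[k] k) : f.symm 1 ≠ 0 := by
  intro h
  have h1 : (1 : k) = 0 := by
    have := congrArg f h
    simp at this
  exact one_ne_zero h1

/-- The endomorphism ring of an interval module over `(ℝ, ≤)` is isomorphic to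
the base field `k`; in particular it is a local ring. -/
theorem intervalModule_end_ring (k : Type) [Field k]
    (J : Set ℝ) (hJ : J.Nonempty) (M : ℝ ⥤ ModuleCat k)
    (hM : IsIntervalModule k J M) :
    Nonempty (End M ≃+* k) ∧ IsLocalRing (End M) := by
  obtain ⟨x₀, hx₀⟩ := hJ
  obtain ⟨hdim, hzero, hbij, -⟩ := hM
  obtain ⟨e⟩ := hdim x₀ hx₀
  set v₀ : M.obj x₀ := e.symm 1 with hv₀
  -- The scalar associated to an endomorphism
  set φ : End M → k := fun η => e (η.app x₀ v₀) with hφ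
  -- Key: every component of η is multiplication by φ η.
  have key : ∀ (η : End M) (x : ℝ), x ∈ J → ∀ w : M.obj x,
      η.app x w = φ η • w := by
    intro η x hx w
    obtain ⟨f⟩ := hdim x hx
    have hs : η.app x w = f (η.app x (f.symm 1)) • w := scalar_endo' f (η.app x) w
    have hs₀ : ∀ u : M.obj x₀, η.app x₀ u = φ η • u := fun u =>
      scalar_endo' e (η.app x₀) u
    -- show the two scalars agree using naturality
    suffices hsc : f (η.app x (f.symm 1)) = φ η by rw [hs, hsc]
    rcases le_total x x₀ with h | h
    · have hnat := congrArg (fun (g : M.obj x ⟶ M.obj x₀) => g (f.symm 1))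
        (η.naturality (homOfLE h))
      simp only [ModuleCat.hom_comp, LinearMap.coe_comp, Function.comp_apply] at hnat
      rw [hs₀, scalar_endo' f (η.app x) (f.symm 1), map_smul] at hnat
      have hinj := (hbij x x₀ h hx hx₀).1
      have hne : (M.map (homOfLE h)) (f.symm 1) ≠ 0 := by
        intro h0
        exact symm_one_ne_zero f (hinj (by simpa using h0))
      have hz := sub_eq_zero.mpr hnat
      rw [← sub_smul] at hz
      rcases smul_eq_zero.mp hz with h1 | h1
      · exact (sub_eq_zero.mp h1).symm
      · exact absurd h1 hne
    · have hnat := congrArg (fun (g : M.obj x₀ ⟶ M.obj x) => g v₀)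
        (η.naturality (homOfLE h))
      simp only [ModuleCat.hom_comp, LinearMap.coe_comp, Function.comp_apply] at hnat
      rw [hs₀ v₀, map_smul, scalar_endo' f (η.app x) (M.map (homOfLE h) v₀)] at hnat
      have hinj := (hbij x₀ x h hx₀ hx).1
      have hne : (M.map (homOfLE h)) v₀ ≠ 0 := by
        intro h0
        exact symm_one_ne_zero e (hinj (by simpa [hv₀] using h0))
      have hz := sub_eq_zero.mpr hnat
      rw [← sub_smul] at hz
      rcases smul_eq_zero.mp hz with h1 | h1
      · exact sub_eq_zero.mp h1
      · exact absurd h1 hne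
  -- basic computations with φ
  have hright : ∀ c : k, φ (c • 𝟙 M) = c := by
    intro c
    show e ((c • 𝟙 M).app x₀ v₀) = c
    have h1 : (c • 𝟙 M).app x₀ v₀ = c • v₀ := rfl
    rw [h1, map_smul, hv₀]
    simp
  have hleft : ∀ η : End M, φ η • 𝟙 M = η := by
    intro η
    apply NatTrans.ext
    funext x
    by_cases hx : x ∈ J
    · ext w
      show φ η • w = η.app x w
      rw [key η x hx w]
    · have := hzero x hx
      ext w
      exact Subsingleton.elim _ _
  have hmul : ∀ η ζ : End M, φ (η * ζ) = φ η * φ ζ := by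
    intro η ζ
    show e ((η * ζ).app x₀ v₀) = φ η * φ ζ
    have h1 : (η * ζ).app x₀ v₀ = η.app x₀ (ζ.app x₀ v₀) := rfl
    rw [h1, key ζ x₀ hx₀ v₀, key η x₀ hx₀, map_smul, map_smul, hv₀]
    simp [smul_eq_mul]
  have hadd : ∀ η ζ : End M, φ (η + ζ) = φ η + φ ζ := by
    intro η ζ
    show e ((η + ζ).app x₀ v₀) = φ η + φ ζ
    have h1 : (η + ζ).app x₀ v₀ = η.app x₀ v₀ + ζ.app x₀ v₀ := rfl
    rw [h1, map_add]
  set ε : End M ≃+* k :=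
    { toFun := φ
      invFun := fun c => c • 𝟙 M
      left_inv := hleft
      right_inv := hright
      map_mul' := hmul
      map_add' := hadd } with hε
  constructor
  · exact ⟨ε⟩
  · haveI hnt : Nontrivial (End M) := ε.toEquiv.nontrivial
    refine ⟨fun {a b} hab => ?_⟩
    by_cases ha : φ a = 0
    · right
      by_cases hb : φ b = 0
      · exfalso
        have h0 : φ (a + b) = 0 := by rw [hadd, ha, hb, add_zero]
        have h1 : φ (a + b) = 1 := by
          rw [hab, show (1 : End M) = (1 : k) • 𝟙 M from (one_smul k (𝟙 M)).symm]
          exact hright 1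
        rw [h0] at h1
        exact zero_ne_one h1
      · have hu : IsUnit (φ b) := isUnit_iff_ne_zero.mpr hb
        have h2 := hu.map ε.symm.toRingHom
        simp only [hε, RingEquiv.toRingHom_eq_coe, RingEquiv.coe_toRingHom] at h2
        exact hleft b ▸ h2
    · left
      have hu : IsUnit (φ a) := isUnit_iff_ne_zero.mpr ha
      have h2 := hu.map ε.symm.toRingHom
      simp only [hε, RingEquiv.toRingHom_eq_coe, RingEquiv.coe_toRingHom] at h2
      exact hleft a ▸ h2
end

section
/- Every finitely generated graded module over the polynomial ring k[t] (k a field, t in degree 1) decomposes as a direct sum of finitely many graded cyclic modules, each isomorphic to a shift of k[t] or to a shift of k[t]/(t^d) for some d ≥ 1. -/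
set_option synthInstance.maxHeartbeats 1000000

open CategoryTheory CategoryTheory.Limits

attribute [local instance] CategoryTheory.Limits.HasFiniteBiproducts.of_hasFiniteProducts

/-- A graded `k[t]`-module, viewed as a functor `ℕ ⥤ Vect_k` (the structure map
`M_i → M_{i+1}` is multiplication by `t`), is finitely generated if finitely many
homogeneous elements generate every graded piece under the `t`-action and
`k`-linear combinations. -/
def IsFinitelyGeneratedGraded (k : Type) [Field k] (M : ℕ ⥤ ModuleCat k) : Prop :=
  ∃ (ι : Type) (_ : Finite ι) (deg : ι → ℕ) (gen : ∀ i, M.obj (deg i)),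
    ∀ (n : ℕ) (x : M.obj n),
      x ∈ Submodule.span k
        {y : M.obj n | ∃ (i : ι) (h : deg i ≤ n), M.map (homOfLE h) (gen i) = y}

namespace PersistProof
variable {k : Type} [Field k]

def Sub (M : ℕ ⥤ ModuleCat k) (S : ∀ n, Submodule k (M.obj n))
    (hS : ∀ (n m : ℕ) (h : n ≤ m), ∀ v, v ∈ S n → M.map (homOfLE h) v ∈ S m) :
    ℕ ⥤ ModuleCat k where
  obj n := ModuleCat.of k (S n)
  map {n m} g := ModuleCat.ofHom ((M.map g).hom.restrict (p := S n) (q := S m) (hS n m (leOfHom g)))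
  map_id n := by
    ext v
    change (M.map (𝟙 n)) v.val = v.val
    rw [M.map_id]
    rfl
  map_comp {n m l} g h := by
    ext v
    change (M.map (g ≫ h)) v.val = (M.map h) ((M.map g) v.val)
    rw [M.map_comp]
    rfl

lemma Sub_map_coe (M : ℕ ⥤ ModuleCat k) (S : ∀ n, Submodule k (M.obj n))
    (hS : ∀ (n m : ℕ) (h : n ≤ m), ∀ v, v ∈ S n → M.map (homOfLE h) v ∈ S m)
    {n m : ℕ} (h : n ≤ m) (v : S n) :
    (S m).subtype ((Sub M S hS).map (homOfLE h) v) = M.map (homOfLE h) ((S n).subtype v) := rfl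

def SubIncl (M : ℕ ⥤ ModuleCat k) (S : ∀ n, Submodule k (M.obj n))
    (hS : ∀ (n m : ℕ) (h : n ≤ m), ∀ v, v ∈ S n → M.map (homOfLE h) v ∈ S m) :
    Sub M S hS ⟶ M where
  app n := ModuleCat.ofHom (S n).subtype
  naturality {n m} g := by
    ext v
    rfl

end PersistProof

namespace PersistProof
variable {k : Type} [Field k]

/-- projection onto S along a complement T, as a natural transformation -/
noncomputable def SubProj (M : ℕ ⥤ ModuleCat k) (S T : ∀ n, Submodule k (M.obj n))
    (hS : ∀ (n m : ℕ) (h : n ≤ m), ∀ v, v ∈ S n → M.map (homOfLE h) v ∈ S m)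
    (hT : ∀ (n m : ℕ) (h : n ≤ m), ∀ v, v ∈ T n → M.map (homOfLE h) v ∈ T m)
    (hc : ∀ n, IsCompl (S n) (T n)) :
    M ⟶ Sub M S hS where
  app n := ModuleCat.ofHom ((S n).projectionOnto (T n) (hc n))
  naturality {n m} g := by
    ext v
    have hv : ((S n).projectionOnto (T n) (hc n) v : M.obj n) +
        ((T n).projectionOnto (S n) (hc n).symm v : M.obj n) = v :=
      Submodule.projection_add_projection_eq_self (hc n) v
    set s := ((S n).projectionOnto (T n) (hc n)) v with hs
    set t := ((T n).projectionOnto (S n) (hc n).symm) v with ht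
    refine Subtype.ext ?_
    change ((S m).projectionOnto (T m) (hc m)) ((M.map g) v) =
      (M.map g) ((s : M.obj n))
    have h1 : (M.map g) v = (M.map g) (s : M.obj n) + (M.map g) (t : M.obj n) := by
      rw [← map_add, hv]
    have h2 : (M.map g) (s : M.obj n) ∈ S m := hS n m (leOfHom g) _ s.2
    have h3 : (M.map g) (t : M.obj n) ∈ T m := hT n m (leOfHom g) _ t.2
    rw [h1, map_add]
    rw [Submodule.projectionOnto_apply_of_mem_right (hc m) h3, add_zero]
    exact congrArg Subtype.val (Submodule.projectionOnto_apply_left (hc m) ⟨_, h2⟩)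
end PersistProof

namespace PersistProof
variable {k : Type} [Field k]

def Decomp (M : ℕ ⥤ ModuleCat k) {nn : ℕ} (Ms : Fin nn → ℕ ⥤ ModuleCat k) : Prop :=
  ∃ (p : ∀ i, M ⟶ Ms i) (s : ∀ i, Ms i ⟶ M),
    (∀ i, s i ≫ p i = 𝟙 (Ms i)) ∧ (∀ i j, i ≠ j → s i ≫ p j = 0) ∧
    (∑ i, p i ≫ s i) = 𝟙 M

lemma Decomp.iso {M : ℕ ⥤ ModuleCat k} {nn : ℕ} {Ms : Fin nn → ℕ ⥤ ModuleCat k}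
    (h : Decomp M Ms) : Nonempty (M ≅ biproduct Ms) := by
  obtain ⟨p, s, hdiag, hoff, hsum⟩ := h
  refine ⟨⟨biproduct.lift p, biproduct.desc s, ?_, ?_⟩⟩
  · rw [biproduct.lift_desc, hsum]
  · apply biproduct.hom_ext'
    intro i
    apply biproduct.hom_ext
    intro j
    simp only [Category.assoc, biproduct.lift_π, biproduct.ι_desc_assoc, Category.id_comp]
    rw [biproduct.ι_π]
    by_cases hij : i = j
    · subst hij; simp [hdiag i]
    · simp [hij, hoff i j hij]

end PersistProof

namespace PersistProof
variable {k : Type} [Field k]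

lemma Decomp.cons {M M0 W : ℕ ⥤ ModuleCat k}
    (p0 : M ⟶ M0) (s0 : M0 ⟶ M) (q : M ⟶ W) (r : W ⟶ M)
    (h1 : s0 ≫ p0 = 𝟙 M0) (h2 : r ≫ q = 𝟙 W) (h3 : s0 ≫ q = 0) (h4 : r ≫ p0 = 0)
    (h5 : p0 ≫ s0 + q ≫ r = 𝟙 M)
    {nn : ℕ} {Ms : Fin nn → ℕ ⥤ ModuleCat k} (hW : Decomp W Ms) :
    Decomp M (Fin.cons M0 Ms) := by
  obtain ⟨p, s, hdiag, hoff, hsum⟩ := hW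
  refine ⟨Fin.cons p0 (fun i => q ≫ p i), Fin.cons s0 (fun i => s i ≫ r), ?_, ?_, ?_⟩
  · intro i
    refine Fin.cases ?_ ?_ i
    · exact h1
    · intro i
      show (s i ≫ r) ≫ (q ≫ p i) = 𝟙 (Ms i)
      rw [Category.assoc, ← Category.assoc r q, h2, Category.id_comp]
      exact hdiag i
  · intro i j hij
    obtain rfl | ⟨i', rfl⟩ := Fin.eq_zero_or_eq_succ i <;>
      obtain rfl | ⟨j', rfl⟩ := Fin.eq_zero_or_eq_succ j
    · exact absurd rfl hij
    · show s0 ≫ (q ≫ p j') = 0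
      rw [← Category.assoc, h3, zero_comp]
    · show (s i' ≫ r) ≫ p0 = 0
      rw [Category.assoc, h4, comp_zero]
    · show (s i' ≫ r) ≫ (q ≫ p j') = 0
      have hne : i' ≠ j' := fun h => hij (by rw [h])
      rw [Category.assoc, ← Category.assoc r q, h2, Category.id_comp, hoff i' j' hne]
  · rw [Fin.sum_univ_succ]
    show p0 ≫ s0 + ∑ i : Fin nn, (q ≫ p i) ≫ s i ≫ r = 𝟙 M
    have : ∑ i : Fin nn, (q ≫ p i) ≫ s i ≫ r = q ≫ (∑ i : Fin nn, p i ≫ s i) ≫ r := by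
      rw [Preadditive.sum_comp, Preadditive.comp_sum]
      simp [Category.assoc]
    rw [this, hsum, Category.id_comp, h5]

end PersistProof

namespace PersistProof
variable {k : Type} [Field k]

section Split
open scoped Classical
variable (M : ℕ ⥤ ModuleCat k)

lemma fcomp {n m l : ℕ} (h1 : n ≤ m) (h2 : m ≤ l) (v : M.obj n) :
    M.map (homOfLE h2) (M.map (homOfLE h1) v) = M.map (homOfLE (h1.trans h2)) v := by
  rw [← homOfLE_comp h1 h2, M.map_comp]
  rfl

lemma fid {n : ℕ} (h : n ≤ n) (v : M.obj n) : M.map (homOfLE h) v = v := by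
  have : homOfLE h = 𝟙 n := rfl
  rw [this, M.map_id]
  rfl

variable (a : ℕ) (x : M.obj a)

noncomputable def xn (n : ℕ) : M.obj n :=
  if h : a ≤ n then M.map (homOfLE h) x else 0

lemma xn_self : xn M a x a = x := by
  rw [xn, dif_pos le_rfl, fid]

lemma xn_lt {n : ℕ} (h : n < a) : xn M a x n = 0 := dif_neg (by omega)

lemma xn_map {n m : ℕ} (h : n ≤ m) (ha : a ≤ n) :
    M.map (homOfLE h) (xn M a x n) = xn M a x m := by
  rw [xn, dif_pos ha, xn, dif_pos (ha.trans h), fcomp]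

lemma xn_zero_mono {n m : ℕ} (ha : a ≤ n) (h0 : xn M a x n = 0) (h : n ≤ m) :
    xn M a x m = 0 := by
  rw [← xn_map M a x h ha, h0, map_zero]

noncomputable def Xsub (n : ℕ) : Submodule k (M.obj n) := Submodule.span k {xn M a x n}

lemma Xsub_mapsto : ∀ (n m : ℕ) (h : n ≤ m), ∀ v, v ∈ Xsub M a x n →
    M.map (homOfLE h) v ∈ Xsub M a x m := by
  intro n m h v hv
  obtain ⟨c, rfl⟩ := Submodule.mem_span_singleton.mp hv
  rw [map_smul]
  by_cases ha : a ≤ n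
  · rw [xn_map M a x h ha]
    exact Submodule.smul_mem _ _ (Submodule.mem_span_singleton_self _)
  · rw [xn, dif_neg ha, map_zero, smul_zero]
    exact Submodule.zero_mem _

variable (N : ℕ)

noncomputable def Wd : ℕ → ∀ n, Submodule k (M.obj n)
  | 0 => fun n => Classical.choose (Submodule.exists_isCompl (Xsub M a x n))
  | (j+1) => fun n =>
      if xn M a x (n+1) ≠ 0 then
        (Wd j (n+1)).comap (ConcreteCategory.hom (C := ModuleCat k) (M.map (homOfLE (Nat.le_succ n))))
      else Classical.choose (Submodule.exists_isCompl (Xsub M a x n))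

noncomputable def Wu : ℕ → ∀ n, Submodule k (M.obj n)
  | 0 => fun n => Wd M a x 0 n
  | (j+1) => fun n => (Wu j (n-1)).map (ConcreteCategory.hom (C := ModuleCat k) (M.map (homOfLE (Nat.sub_le n 1))))

noncomputable def Wsub (n : ℕ) : Submodule k (M.obj n) :=
  if n ≤ N then Wd M a x (N - n) n else Wu M a x (n - N) n

lemma Wsub_top : Wsub M a x N N = Classical.choose (Submodule.exists_isCompl (Xsub M a x N)) := by
  rw [Wsub, if_pos le_rfl, Nat.sub_self, Wd]

lemma Wsub_low {n : ℕ} (h : n < N) :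
    Wsub M a x N n = if xn M a x (n+1) ≠ 0 then
        (Wsub M a x N (n+1)).comap (ConcreteCategory.hom (C := ModuleCat k) (M.map (homOfLE (Nat.le_succ n))))
      else Classical.choose (Submodule.exists_isCompl (Xsub M a x n)) := by
  have h1 : N - n = (N - (n+1)) + 1 := by omega
  rw [Wsub, if_pos h.le, h1, Wd, Wsub, if_pos (by omega : n + 1 ≤ N)]

lemma Wsub_high {n : ℕ} (h : N ≤ n) :
    Wsub M a x N (n+1) = (Wsub M a x N n).map (ConcreteCategory.hom (C := ModuleCat k) (M.map (homOfLE (Nat.le_succ n)))) := by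
  have h1 : n + 1 - N = (n - N) + 1 := by omega
  rw [Wsub, if_neg (by omega), h1, Wu]
  rcases Nat.eq_or_lt_of_le h with h2 | h2
  · subst h2
    rw [Nat.sub_self, Wu, Wsub, if_pos le_rfl, Nat.sub_self]
    rfl
  · rw [Wsub, if_neg (by omega)]
    rfl

end Split
end PersistProof

namespace PersistProof
variable {k : Type} [Field k]
section Invariants
open scoped Classical
variable (M : ℕ ⥤ ModuleCat k) (a : ℕ) (x : M.obj a) (N : ℕ)

lemma X_compl_low (hmin : ∀ n, n < a → ∀ v : M.obj n, v = 0) :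
    ∀ j n, n + j = N → IsCompl (Xsub M a x n) (Wsub M a x N n) := by
  intro j
  induction j with
  | zero =>
    intro n h
    have : n = N := by omega
    subst this
    rw [Wsub_top]
    exact Classical.choose_spec (Submodule.exists_isCompl _)
  | succ j ih =>
    intro n h
    have hn : n < N := by omega
    rw [Wsub_low M a x N hn]
    by_cases h0 : xn M a x (n+1) ≠ 0
    · rw [if_pos h0]
      have IH := ih (n+1) (by omega)
      by_cases ha : a ≤ n
      · constructor
        · rw [Submodule.disjoint_def]
          intro v hvX hvW
          obtain ⟨c, rfl⟩ := Submodule.mem_span_singleton.mp hvX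
          have hmem : M.map (homOfLE (Nat.le_succ n)) (c • xn M a x n) ∈ Wsub M a x N (n+1) := hvW
          rw [map_smul, xn_map M a x (Nat.le_succ n) ha] at hmem
          have h2 : c • xn M a x (n+1) ∈ Xsub M a x (n+1) :=
            Submodule.smul_mem _ _ (Submodule.mem_span_singleton_self _)
          have h3 := Submodule.disjoint_def.mp IH.disjoint _ h2 hmem
          rcases smul_eq_zero.mp h3 with hc | hc
          · rw [hc, zero_smul]
          · exact absurd hc h0
        · rw [codisjoint_iff, Submodule.eq_top_iff']
          intro v
          have hv : M.map (homOfLE (Nat.le_succ n)) v ∈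
              Xsub M a x (n+1) ⊔ Wsub M a x N (n+1) := by
            rw [IH.codisjoint.eq_top]; trivial
          obtain ⟨y, hy, w, hw, hyw⟩ := Submodule.mem_sup.mp hv
          obtain ⟨c, rfl⟩ := Submodule.mem_span_singleton.mp hy
          have hu : v - c • xn M a x n ∈
              (Wsub M a x N (n+1)).comap (ConcreteCategory.hom (C := ModuleCat k) (M.map (homOfLE (Nat.le_succ n)))) := by
            rw [Submodule.mem_comap, map_sub, map_smul, xn_map M a x (Nat.le_succ n) ha]
            have : M.map (homOfLE (Nat.le_succ n)) v - c • xn M a x (n+1) = w := by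
              rw [← hyw]; abel
            rw [this]
            exact hw
          have hdec : v = c • xn M a x n + (v - c • xn M a x n) := by abel
          rw [hdec]
          exact Submodule.add_mem_sup
            (Submodule.smul_mem _ _ (Submodule.mem_span_singleton_self _)) hu
      · have hXbot : Xsub M a x n = ⊥ := by
          rw [Xsub, xn_lt M a x (by omega), Submodule.span_zero_singleton]
        have hWtop : (Wsub M a x N (n+1)).comap (ConcreteCategory.hom (C := ModuleCat k) (M.map (homOfLE (Nat.le_succ n)))) = ⊤ := by
          rw [Submodule.eq_top_iff']
          intro v
          rw [Submodule.mem_comap, hmin n (by omega) v, map_zero]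
          exact Submodule.zero_mem _
        rw [hXbot, hWtop]
        exact isCompl_bot_top
    · rw [if_neg h0]
      exact Classical.choose_spec (Submodule.exists_isCompl _)

lemma X_compl_high (haN : a ≤ N)
    (hbij : ∀ n, N ≤ n → Function.Bijective (M.map (homOfLE (Nat.le_succ n))))
    (hmin : ∀ n, n < a → ∀ v : M.obj n, v = 0) :
    ∀ n, N ≤ n → IsCompl (Xsub M a x n) (Wsub M a x N n) := by
  intro n hn
  induction n, hn using Nat.le_induction with
  | base => exact X_compl_low M a x N hmin 0 N (by omega)
  | succ n hn IH =>
    rw [Wsub_high M a x N hn]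
    have hf := hbij n hn
    have hmapX : Xsub M a x (n+1) =
        (Xsub M a x n).map (ConcreteCategory.hom (C := ModuleCat k) (M.map (homOfLE (Nat.le_succ n)))) := by
      rw [Xsub, Xsub, Submodule.map_span, Set.image_singleton,
        xn_map M a x (Nat.le_succ n) (haN.trans hn)]
    rw [hmapX]
    constructor
    · rw [Submodule.disjoint_def]
      intro v hvX hvW
      obtain ⟨y, hy, rfl⟩ := Submodule.mem_map.mp hvX
      obtain ⟨w, hw, hwe⟩ := Submodule.mem_map.mp hvW
      have : w = y := hf.injective hwe
      subst this
      have : w = 0 := Submodule.disjoint_def.mp IH.disjoint _ hy hw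
      rw [this, map_zero]
    · rw [codisjoint_iff, Submodule.eq_top_iff']
      intro v
      obtain ⟨u, rfl⟩ := hf.surjective v
      have hu : u ∈ Xsub M a x n ⊔ Wsub M a x N n := by
        rw [IH.codisjoint.eq_top]; trivial
      obtain ⟨y, hy, w, hw, hyw⟩ := Submodule.mem_sup.mp hu
      rw [← hyw, map_add]
      exact Submodule.add_mem_sup (Submodule.mem_map_of_mem hy) (Submodule.mem_map_of_mem hw)

lemma X_compl (haN : a ≤ N)
    (hbij : ∀ n, N ≤ n → Function.Bijective (M.map (homOfLE (Nat.le_succ n))))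
    (hmin : ∀ n, n < a → ∀ v : M.obj n, v = 0) :
    ∀ n, IsCompl (Xsub M a x n) (Wsub M a x N n) := by
  intro n
  by_cases h : n ≤ N
  · exact X_compl_low M a x N hmin (N - n) n (by omega)
  · exact X_compl_high M a x N haN hbij hmin n (by omega)

end Invariants
end PersistProof

namespace PersistProof
variable {k : Type} [Field k]
section Invariants2
open scoped Classical
variable (M : ℕ ⥤ ModuleCat k) (a : ℕ) (x : M.obj a) (N : ℕ)

lemma W_eq_top_of_xn_zero (haN : a ≤ N)
    (hbij : ∀ n, N ≤ n → Function.Bijective (M.map (homOfLE (Nat.le_succ n))))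
    (hmin : ∀ n, n < a → ∀ v : M.obj n, v = 0)
    {n : ℕ} (h0 : xn M a x n = 0) : Wsub M a x N n = ⊤ := by
  have hc := X_compl M a x N haN hbij hmin n
  have hXbot : Xsub M a x n = ⊥ := by
    rw [Xsub, h0, Submodule.span_zero_singleton]
  rw [hXbot] at hc
  have := hc.codisjoint
  rw [codisjoint_iff, bot_sup_eq] at this
  exact this

lemma W_mapsto_succ (haN : a ≤ N)
    (hbij : ∀ n, N ≤ n → Function.Bijective (M.map (homOfLE (Nat.le_succ n))))
    (hmin : ∀ n, n < a → ∀ v : M.obj n, v = 0) (n : ℕ) :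
    ∀ v, v ∈ Wsub M a x N n → M.map (homOfLE (Nat.le_succ n)) v ∈ Wsub M a x N (n+1) := by
  intro v hv
  by_cases hn : N ≤ n
  · rw [Wsub_high M a x N hn]
    exact Submodule.mem_map_of_mem hv
  · rw [Wsub_low M a x N (by omega)] at hv
    by_cases h0 : xn M a x (n+1) ≠ 0
    · rw [if_pos h0] at hv
      exact hv
    · rw [W_eq_top_of_xn_zero M a x N haN hbij hmin (not_not.mp h0)]
      trivial

lemma W_mapsto (haN : a ≤ N)
    (hbij : ∀ n, N ≤ n → Function.Bijective (M.map (homOfLE (Nat.le_succ n))))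
    (hmin : ∀ n, n < a → ∀ v : M.obj n, v = 0) :
    ∀ (n m : ℕ) (h : n ≤ m), ∀ v, v ∈ Wsub M a x N n →
      M.map (homOfLE h) v ∈ Wsub M a x N m := by
  intro n m h
  induction m, h using Nat.le_induction with
  | base => intro v hv; rw [fid]; exact hv
  | succ m hm IH =>
    intro v hv
    have := W_mapsto_succ M a x N haN hbij hmin m _ (IH v hv)
    rw [fcomp] at this
    exact this

lemma W_surj_high (hn : N ≤ n) :
    ∀ w, w ∈ Wsub M a x N (n+1) → ∃ v ∈ Wsub M a x N n,
      M.map (homOfLE (Nat.le_succ n)) v = w := by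
  intro w hw
  rw [Wsub_high M a x N hn] at hw
  exact Submodule.mem_map.mp hw

end Invariants2
end PersistProof


namespace PersistProof
variable {k : Type} [Field k]
section IntervalX
open scoped Classical
variable (M : ℕ ⥤ ModuleCat k) (a : ℕ) (x : M.obj a)

lemma X_subsingleton {n : ℕ} (h0 : xn M a x n = 0) :
    Subsingleton ((Sub M (Xsub M a x) (Xsub_mapsto M a x)).obj n) := by
  have hz : ∀ v : (Sub M (Xsub M a x) (Xsub_mapsto M a x)).obj n, v = 0 := by
    intro v
    have hv : v.1 ∈ Submodule.span k {xn M a x n} := v.2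
    obtain ⟨c, hc⟩ := Submodule.mem_span_singleton.mp hv
    refine Subtype.ext ?_
    show v.1 = 0
    rw [← hc, h0, smul_zero]
  exact ⟨fun u v => by rw [hz u, hz v]⟩

lemma X_interval (J : Set ℕ) (hJ : ∀ n, n ∈ J ↔ xn M a x n ≠ 0) :
    IsIntervalModule k J (Sub M (Xsub M a x) (Xsub_mapsto M a x)) := by
  have key : ∀ n, a ≤ n ∨ xn M a x n = 0 := by
    intro n
    by_cases h : a ≤ n
    · exact Or.inl h
    · exact Or.inr (xn_lt M a x (by omega))
  refine ⟨?_, ?_, ?_, ?_⟩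
  · intro n hn
    have hne : xn M a x n ≠ 0 := (hJ n).mp hn
    exact ⟨(LinearEquiv.toSpanNonzeroSingleton k _ (xn M a x n) hne).symm⟩
  · intro n hn
    exact X_subsingleton M a x (not_not.mp (fun h => hn ((hJ n).mpr h)))
  · intro n m h hn hm
    have hxn : xn M a x n ≠ 0 := (hJ n).mp hn
    have hxm : xn M a x m ≠ 0 := (hJ m).mp hm
    have ha : a ≤ n := by
      rcases key n with h' | h'
      · exact h'
      · exact absurd h' hxn
    constructor
    · intro u v huv
      obtain ⟨c, hc⟩ := Submodule.mem_span_singleton.mp u.2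
      obtain ⟨c', hc'⟩ := Submodule.mem_span_singleton.mp v.2
      have h1 : M.map (homOfLE h) u.1 = M.map (homOfLE h) v.1 :=
        congrArg Subtype.val huv
      rw [← hc, ← hc', map_smul, map_smul, xn_map M a x h ha] at h1
      have hcc : (c - c') • xn M a x m = 0 := by rw [sub_smul, h1, sub_self]
      rcases smul_eq_zero.mp hcc with h' | h'
      · refine Subtype.ext ?_
        rw [← hc, ← hc', sub_eq_zero.mp h']
      · exact absurd h' hxm
    · intro w
      obtain ⟨c, hc⟩ := Submodule.mem_span_singleton.mp w.2
      refine ⟨⟨c • xn M a x n,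
        Submodule.smul_mem _ _ (Submodule.mem_span_singleton_self _)⟩, ?_⟩
      refine Subtype.ext ?_
      show M.map (homOfLE h) (c • xn M a x n) = w.1
      rw [map_smul, xn_map M a x h ha, hc]
  · intro n m h hnm
    ext v
    refine Subtype.ext ?_
    show M.map (homOfLE h) v.1 = (0 : M.obj m)
    have hz : xn M a x n = 0 → M.map (homOfLE h) v.1 = 0 := by
      intro h0
      obtain ⟨c, hc⟩ := Submodule.mem_span_singleton.mp v.2
      rw [← hc, h0, smul_zero, map_zero]
    rcases hnm with hn | hm
    · rcases key n with _ | h0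
      · exact hz (not_not.mp (fun hh => hn ((hJ n).mpr hh)))
      · exact hz h0
    · have h0m : xn M a x m = 0 := not_not.mp (fun hh => hm ((hJ m).mpr hh))
      rcases key n with ha | h0
      · obtain ⟨c, hc⟩ := Submodule.mem_span_singleton.mp v.2
        rw [← hc, map_smul, xn_map M a x h ha, h0m, smul_zero]
      · exact hz h0

end IntervalX
end PersistProof

namespace PersistProof
variable {k : Type} [Field k]
section JShape
open scoped Classical
variable (M : ℕ ⥤ ModuleCat k) (a : ℕ) (x : M.obj a) (N : ℕ)

lemma J_shape (hx : x ≠ 0) (haN : a ≤ N)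
    (hbij : ∀ n, N ≤ n → Function.Bijective (M.map (homOfLE (Nat.le_succ n)))) :
    ({n | xn M a x n ≠ 0} = Set.Ici a) ∨
    (∃ d, 1 ≤ d ∧ {n | xn M a x n ≠ 0} = Set.Ico a (a + d)) := by
  by_cases hN : xn M a x N ≠ 0
  · left
    have alive : ∀ n, N ≤ n → xn M a x n ≠ 0 := by
      intro n hn
      induction n, hn using Nat.le_induction with
      | base => exact hN
      | succ n hn IH =>
        intro h0
        rw [← xn_map M a x (Nat.le_succ n) (haN.trans hn)] at h0
        have : xn M a x n = 0 := by
          apply (hbij n hn).injective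
          rw [h0, map_zero]
        exact IH this
    ext n
    simp only [Set.mem_setOf_eq, Set.mem_Ici]
    constructor
    · intro hne
      by_contra hlt
      exact hne (xn_lt M a x (by omega))
    · intro ha
      rcases le_or_gt n N with h | h
      · intro h0
        exact hN (xn_zero_mono M a x ha h0 h)
      · exact alive n h.le
  · right
    have hex : ∃ m, a ≤ m ∧ xn M a x m = 0 := ⟨N, haN, not_not.mp hN⟩
    set D := Nat.find hex with hD
    obtain ⟨haD, hxD⟩ := Nat.find_spec hex
    have haD' : a < D := by
      rcases Nat.eq_or_lt_of_le haD with h | h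
      · exfalso
        rw [← h, xn_self] at hxD
        exact hx hxD
      · exact h
    refine ⟨D - a, by omega, ?_⟩
    have hDa : a + (D - a) = D := by omega
    rw [hDa]
    ext n
    simp only [Set.mem_setOf_eq, Set.mem_Ico]
    constructor
    · intro hne
      have ha : a ≤ n := by
        by_contra hlt
        exact hne (xn_lt M a x (by omega))
      refine ⟨ha, ?_⟩
      by_contra hDn
      exact hne (xn_zero_mono M a x haD hxD (by omega))
    · rintro ⟨ha, hn⟩ h0
      have := Nat.find_min' hex ⟨ha, h0⟩
      omega

end JShape
end PersistProof

namespace PersistProof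
variable {k : Type} [Field k]
section SplitStep
open scoped Classical
variable (M : ℕ ⥤ ModuleCat k) (a : ℕ) (x : M.obj a) (N : ℕ)

lemma split_decomp (hx : x ≠ 0) (haN : a ≤ N)
    (hbij : ∀ n, N ≤ n → Function.Bijective (M.map (homOfLE (Nat.le_succ n))))
    (hmin : ∀ n, n < a → ∀ v : M.obj n, v = 0)
    {nn : ℕ} {Ms : Fin nn → ℕ ⥤ ModuleCat k}
    (hW : Decomp (Sub M (Wsub M a x N) (W_mapsto M a x N haN hbij hmin)) Ms) :
    Decomp M (Fin.cons (Sub M (Xsub M a x) (Xsub_mapsto M a x)) Ms) := by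
  set hc := X_compl M a x N haN hbij hmin with hhc
  set hXm := Xsub_mapsto M a x with hhXm
  set hWm := W_mapsto M a x N haN hbij hmin with hhWm
  refine Decomp.cons
    (SubProj M (Xsub M a x) (Wsub M a x N) hXm hWm hc)
    (SubIncl M (Xsub M a x) hXm)
    (SubProj M (Wsub M a x N) (Xsub M a x) hWm hXm (fun n => (hc n).symm))
    (SubIncl M (Wsub M a x N) hWm)
    ?_ ?_ ?_ ?_ ?_ hW
  · apply NatTrans.ext
    funext n
    apply ModuleCat.hom_ext
    apply LinearMap.ext
    intro u
    exact Submodule.projectionOnto_apply_left (hc n) u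
  · apply NatTrans.ext
    funext n
    apply ModuleCat.hom_ext
    apply LinearMap.ext
    intro u
    exact Submodule.projectionOnto_apply_left ((hc n).symm) u
  · apply NatTrans.ext
    funext n
    apply ModuleCat.hom_ext
    apply LinearMap.ext
    intro u
    exact Submodule.projectionOnto_apply_of_mem_right ((hc n).symm) u.2
  · apply NatTrans.ext
    funext n
    apply ModuleCat.hom_ext
    apply LinearMap.ext
    intro u
    exact Submodule.projectionOnto_apply_of_mem_right (hc n) u.2
  · apply NatTrans.ext
    funext n
    apply ModuleCat.hom_ext
    apply LinearMap.ext
    intro v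
    exact Submodule.projection_add_projection_eq_self (hc n) v

end SplitStep
end PersistProof

namespace PersistProof
variable {k : Type} [Field k]

lemma all_zero_decomp (M : ℕ ⥤ ModuleCat k) (h : ∀ (n : ℕ) (v : M.obj n), v = 0) :
    Decomp M (fun i : Fin 0 => i.elim0) := by
  refine ⟨fun i => i.elim0, fun i => i.elim0, fun i => i.elim0, fun i => i.elim0, ?_⟩
  rw [Finset.univ_eq_empty, Finset.sum_empty]
  apply NatTrans.ext
  funext n
  apply ModuleCat.hom_ext
  apply LinearMap.ext
  intro v
  rw [h n v]
  simp

section Master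
open scoped Classical

lemma master : ∀ (m : ℕ) (M : ℕ ⥤ ModuleCat k) (N : ℕ),
    (∀ n, FiniteDimensional k (M.obj n)) →
    (∀ n, N ≤ n → Function.Bijective (M.map (homOfLE (Nat.le_succ n)))) →
    (∑ n ∈ Finset.range (N+1), Module.finrank k (M.obj n)) ≤ m →
    ∃ (nn : ℕ) (Ms : Fin nn → ℕ ⥤ ModuleCat k),
      (∀ i, (∃ a, IsIntervalModule k (Set.Ici a) (Ms i)) ∨
        (∃ a d, 1 ≤ d ∧ IsIntervalModule k (Set.Ico a (a + d)) (Ms i))) ∧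
      Decomp M Ms := by
  intro m
  induction m with
  | zero =>
    intro M N hfin hbij hsum
    refine ⟨0, fun i => i.elim0, fun i => i.elim0, ?_⟩
    apply all_zero_decomp
    have hle : ∀ n, n ≤ N → ∀ v : M.obj n, v = 0 := by
      intro n hn v
      have h0 : Module.finrank k (M.obj n) = 0 := by
        have := Finset.sum_eq_zero_iff.mp (Nat.le_zero.mp hsum) n
          (Finset.mem_range.mpr (by omega))
        exact this
      haveI := hfin n
      have := Module.finrank_zero_iff.mp h0
      exact Subsingleton.elim v 0
    intro n
    rcases le_or_gt n N with h | h
    · exact hle n h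
    · intro v
      induction n with
      | zero => omega
      | succ n IHn =>
        obtain ⟨u, rfl⟩ := (hbij n (by omega)).surjective v
        rcases le_or_gt n N with h' | h'
        · rw [hle n h' u, map_zero]
        · rw [IHn (by omega) u, map_zero]
  | succ m IH =>
    intro M N hfin hbij hsum
    by_cases hz : ∃ (n : ℕ), n ≤ N ∧ ∃ v : M.obj n, v ≠ 0
    · obtain ⟨n0, hn0, v0, hv0⟩ := hz
      have hP : ∃ n, ∃ v : M.obj n, v ≠ 0 := ⟨n0, v0, hv0⟩
      set a := Nat.find hP with ha
      obtain ⟨x, hx⟩ := Nat.find_spec hP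
      have haN : a ≤ N := le_trans (Nat.find_min' hP ⟨v0, hv0⟩) hn0
      have hmin : ∀ n, n < a → ∀ v : M.obj n, v = 0 := by
        intro n hn v
        by_contra hv
        exact (Nat.find_min hP hn) ⟨v, hv⟩
      -- apply IH to the W subfunctor
      set MW := Sub M (Wsub M a x N) (W_mapsto M a x N haN hbij hmin) with hMW
      have hfinW : ∀ n, FiniteDimensional k (MW.obj n) := by
        intro n
        haveI := hfin n
        exact (inferInstance : FiniteDimensional k (Wsub M a x N n))
      have hbijW : ∀ n, N ≤ n → Function.Bijective (MW.map (homOfLE (Nat.le_succ n))) := by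
        intro n hn
        constructor
        · intro u v huv
          refine Subtype.ext ?_
          exact (hbij n hn).injective (congrArg Subtype.val huv)
        · intro w
          obtain ⟨v, hv, hveq⟩ := W_surj_high M a x N hn w.1 w.2
          exact ⟨⟨v, hv⟩, Subtype.ext hveq⟩
      have hc := X_compl M a x N haN hbij hmin
      have hsumW : (∑ n ∈ Finset.range (N+1), Module.finrank k (MW.obj n)) ≤ m := by
        have hlt : (∑ n ∈ Finset.range (N+1), Module.finrank k (MW.obj n)) <
            (∑ n ∈ Finset.range (N+1), Module.finrank k (M.obj n)) := by
          apply Finset.sum_lt_sum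
          · intro n _
            haveI := hfin n
            exact Submodule.finrank_le (Wsub M a x N n)
          · refine ⟨a, Finset.mem_range.mpr (by omega), ?_⟩
            haveI := hfin a
            have heq := Submodule.finrank_add_eq_of_isCompl (hc a)
            have h1 : Module.finrank k (Xsub M a x a) = 1 := by
              rw [Xsub, xn_self]
              exact finrank_span_singleton hx
            rw [h1] at heq
            have heq2 : Module.finrank k (MW.obj a) =
              Module.finrank k (Wsub M a x N a) := rfl
            omega
        omega
      obtain ⟨nn, Ms, hint, hdec⟩ := IH MW N hfinW hbijW hsumW
      refine ⟨nn + 1, Fin.cons (Sub M (Xsub M a x) (Xsub_mapsto M a x)) Ms, ?_, ?_⟩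
      · intro i
        obtain rfl | ⟨i', rfl⟩ := Fin.eq_zero_or_eq_succ i
        · rw [Fin.cons_zero]
          rcases J_shape M a x N hx haN hbij with hshape | ⟨d, hd, hshape⟩
          · left
            exact ⟨a, hshape ▸ X_interval M a x _ (fun n => Iff.rfl)⟩
          · right
            exact ⟨a, d, hd, hshape ▸ X_interval M a x _ (fun n => Iff.rfl)⟩
        · rw [Fin.cons_succ]
          exact hint i'
      · exact split_decomp M a x N hx haN hbij hmin hdec
    · push_neg at hz
      refine ⟨0, fun i => i.elim0, fun i => i.elim0, ?_⟩
      apply all_zero_decomp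
      intro n
      rcases le_or_gt n N with h | h
      · exact hz n h
      · intro v
        induction n with
        | zero => omega
        | succ n IHn =>
          obtain ⟨u, rfl⟩ := (hbij n (by omega)).surjective v
          rcases le_or_gt n N with h' | h'
          · rw [hz n h' u, map_zero]
          · rw [IHn (by omega) u, map_zero]

end Master
end PersistProof

namespace PersistProof
variable {k : Type} [Field k]

lemma finrank_le_of_surj {V W : Type} [AddCommGroup V] [Module k V] [AddCommGroup W]
    [Module k W] [FiniteDimensional k V] (f : V →ₗ[k] W) (h : Function.Surjective f) :
    Module.finrank k W ≤ Module.finrank k V := by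
  have h1 := LinearMap.finrank_range_le f
  rwa [LinearMap.range_eq_top.mpr h, finrank_top] at h1

end PersistProof

open PersistProof in
theorem structure_aux (k : Type) [Field k]
    (M : ℕ ⥤ ModuleCat k)
    (hM : ∃ (ι : Type) (_ : Finite ι) (deg : ι → ℕ) (gen : ∀ i, M.obj (deg i)),
    ∀ (n : ℕ) (x : M.obj n),
      x ∈ Submodule.span k
        {y : M.obj n | ∃ (i : ι) (h : deg i ≤ n), M.map (homOfLE h) (gen i) = y}) :
    ∃ (n : ℕ) (Ms : Fin n → (ℕ ⥤ ModuleCat k)),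
      (∀ i : Fin n,
        (∃ a : ℕ, IsIntervalModule k (Set.Ici a) (Ms i)) ∨
        (∃ (a d : ℕ), 1 ≤ d ∧ IsIntervalModule k (Set.Ico a (a + d)) (Ms i))) ∧
      Nonempty (M ≅ biproduct Ms) := by
  obtain ⟨ι, hι, deg, gen, hgen⟩ := hM
  haveI := hι
  haveI : Fintype ι := Fintype.ofFinite ι
  obtain ⟨N, hNdef⟩ : ∃ N, N = Finset.univ.sup deg := ⟨_, rfl⟩
  -- finite dimensionality of each piece
  have hfin : ∀ n, FiniteDimensional k (M.obj n) := by
    intro n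
    set S := {y : M.obj n | ∃ (i : ι) (h : deg i ≤ n), M.map (homOfLE h) (gen i) = y} with hS
    have hSfin : S.Finite := by
      have : S ⊆ Set.range (fun p : {i : ι // deg i ≤ n} =>
          M.map (homOfLE p.2) (gen p.1)) := by
        rintro y ⟨i, hi, rfl⟩
        exact ⟨⟨i, hi⟩, rfl⟩
      exact Set.Finite.subset (Set.finite_range _) this
    have htop : Submodule.span k S = ⊤ := by
      rw [Submodule.eq_top_iff']
      intro v
      exact hgen n v
    exact Module.finite_def.mpr ⟨hSfin.toFinset, by rw [Set.Finite.coe_toFinset]; exact htop⟩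
  -- eventual surjectivity
  have hsurj : ∀ n, N ≤ n → Function.Surjective (M.map (homOfLE (Nat.le_succ n))) := by
    intro n hn v
    have hv := hgen (n+1) v
    have hle : Submodule.span k
        {y : M.obj (n+1) | ∃ (i : ι) (h : deg i ≤ n+1), M.map (homOfLE h) (gen i) = y} ≤
        LinearMap.range (ConcreteCategory.hom (C := ModuleCat k) (M.map (homOfLE (Nat.le_succ n))) : M.obj n →ₗ[k] M.obj (n+1)) := by
      rw [Submodule.span_le]
      rintro y ⟨i, hi, rfl⟩
      have hsup : Finset.univ.sup deg ≤ n := by rw [← hNdef]; exact hn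
      have hdi : deg i ≤ n := le_trans (Finset.le_sup (Finset.mem_univ i)) hsup
      refine ⟨M.map (homOfLE hdi) (gen i), ?_⟩
      rw [fcomp]
    obtain ⟨u, hu⟩ := hle hv
    exact ⟨u, hu⟩
  -- stabilization of dimensions
  obtain ⟨d, hd⟩ : ∃ d : ℕ → ℕ, ∀ j, d j = Module.finrank k (M.obj (N + j)) :=
    ⟨_, fun _ => rfl⟩
  have hdle : ∀ j, d (j+1) ≤ d j := by
    intro j
    haveI := hfin (N + j)
    rw [hd, hd]
    have he : N + (j + 1) = (N + j) + 1 := by omega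
    rw [he]
    exact finrank_le_of_surj _ (hsurj (N + j) (by omega))
  have hdmono : ∀ j j', j ≤ j' → d j' ≤ d j := by
    intro j j' h
    induction j', h using Nat.le_induction with
    | base => exact le_rfl
    | succ j' hj IH => exact le_trans (hdle j') IH
  have hne : (Set.range d).Nonempty := ⟨d 0, ⟨0, rfl⟩⟩
  obtain ⟨j0, hj0⟩ := Nat.sInf_mem hne
  have hmin : ∀ j, sInf (Set.range d) ≤ d j := fun j => Nat.sInf_le ⟨j, rfl⟩
  have hbij : ∀ n, N + j0 ≤ n → Function.Bijective (M.map (homOfLE (Nat.le_succ n))) := by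
    intro n hn
    have hNn : N ≤ n := by omega
    have h1 : Module.finrank k (M.obj n) = d (n - N) := by
      rw [hd, show N + (n - N) = n by omega]
    have h2 : Module.finrank k (M.obj (n+1)) = d (n + 1 - N) := by
      rw [hd, show N + (n + 1 - N) = n + 1 by omega]
    have heq : Module.finrank k (M.obj n) = Module.finrank k (M.obj (n+1)) := by
      have ha := hdmono j0 (n - N) (Nat.le_sub_of_add_le (by omega))
      have hb := hdmono j0 (n + 1 - N) (Nat.le_sub_of_add_le (by omega))
      have hc := hmin (n - N)
      have hc' := hmin (n + 1 - N)
      rw [h1, h2]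
      omega
    haveI := hfin n
    haveI := hfin (n+1)
    have hs := hsurj n hNn
    exact ⟨(LinearMap.injective_iff_surjective_of_finrank_eq_finrank heq).mpr hs, hs⟩
  obtain ⟨nn, Ms, hint, hdec⟩ :=
    master (∑ n ∈ Finset.range (N + j0 + 1), Module.finrank k (M.obj n))
      M (N + j0) hfin hbij le_rfl
  exact ⟨nn, Ms, hint, hdec.iso⟩

/-- Structure theorem for finitely generated graded `k[t]`-modules: any such
module is a finite direct sum of graded cyclic modules, each a shift `k[t](−a)`
of the free module (an interval module on `[a, ∞)`) or a shift
`(k[t]/(t^d))(−a)` of a torsion cyclic module (an interval module on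
`[a, a+d)`). -/
theorem gradedModule_structure_theorem (k : Type) [Field k]
    (M : ℕ ⥤ ModuleCat k) (hM : IsFinitelyGeneratedGraded k M) :
    ∃ (n : ℕ) (Ms : Fin n → (ℕ ⥤ ModuleCat k)),
      (∀ i : Fin n,
        (∃ a : ℕ, IsIntervalModule k (Set.Ici a) (Ms i)) ∨
        (∃ (a d : ℕ), 1 ≤ d ∧ IsIntervalModule k (Set.Ico a (a + d)) (Ms i))) ∧
      Nonempty (M ≅ biproduct Ms) := by
  exact structure_aux k M hM
end
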